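/- For the single-port DC circuit with CPL, the matrix R + Z evaluated at the equilibrium (φ̄_s, q̄_s) — namely diag(r_ℓ, 1/r_p − C²P/(q̄_s²)) — is positive definite if and only if P < r_p v_g²/(r_p + 2r_ℓ)². -/

import Mathlib

open Matrix

set_option maxHeartbeats 1600000 in
/-- For the single-port DC circuit with a constant power load, the matrix `R + Z`
evaluated at the stable equilibrium `(φ̄ₛ, q̄ₛ)`, namely
`diag(r_ℓ, 1/r_p − C²P/q̄ₛ²)`, is positive definite iff `P < r_p v_g²/(r_p + 2 r_ℓ)²`. -/
theorem singlePort_RplusZ_posDef_iff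
    (L C rl rp vg P : ℝ)
    (hL : 0 < L) (hC : 0 < C) (hrl : 0 < rl) (hrp : 0 < rp) (hvg : 0 < vg) (hP : 0 < P)
    (hΔ : 0 ≤ vg ^ 2 - 4 * rl * (rl + rp) * P / rp) :
    (Matrix.diagonal
        ![rl, 1 / rp - C ^ 2 * P /
            (C * rp * (vg + Real.sqrt (vg ^ 2 - 4 * rl * (rl + rp) * P / rp)) /
              (2 * (rl + rp))) ^ 2]).PosDef
      ↔ P < rp * vg ^ 2 / (rp + 2 * rl) ^ 2 := by
  set s := Real.sqrt (vg ^ 2 - 4 * rl * (rl + rp) * P / rp) with hsdef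
  have hs0 : 0 ≤ s := Real.sqrt_nonneg _
  have hs2 : s ^ 2 = vg ^ 2 - 4 * rl * (rl + rp) * P / rp := Real.sq_sqrt hΔ
  have hs2' : rp * s ^ 2 = rp * vg ^ 2 - 4 * rl * (rl + rp) * P := by
    field_simp at hs2; nlinarith [hs2]
  clear_value s
  clear hsdef
  have hvs : 0 < vg + s := by linarith
  have hq : 0 < C * rp * (vg + s) / (2 * (rl + rp)) := by positivity
  have key : 0 < 1 / rp - C ^ 2 * P / (C * rp * (vg + s) / (2 * (rl + rp))) ^ 2 ↔
      P < rp * vg ^ 2 / (rp + 2 * rl) ^ 2 := by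
    rw [sub_pos, div_lt_div_iff₀ (by positivity) hrp, one_mul, lt_div_iff₀ (by positivity)]
    have hq2 : (C * rp * (vg + s) / (2 * (rl + rp))) ^ 2 =
        C ^ 2 * rp ^ 2 * (vg + s) ^ 2 / (2 * (rl + rp)) ^ 2 := by
      rw [div_pow]; congr 1; ring
    rw [hq2, ← sub_pos]
    have hden : (0:ℝ) < (2 * (rl + rp)) ^ 2 := by positivity
    rw [show C ^ 2 * rp ^ 2 * (vg + s) ^ 2 / (2 * (rl + rp)) ^ 2 - C ^ 2 * P * rp =
        (C ^ 2 * rp ^ 2 * (vg + s) ^ 2 - C ^ 2 * P * rp * (2 * (rl + rp)) ^ 2) /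
          (2 * (rl + rp)) ^ 2 by field_simp, div_pos_iff]
    constructor
    · rintro (⟨h, -⟩ | ⟨-, h⟩)
      · -- from C²rp²(vg+s)² > C²Prp(2(rl+rp))²
        have h4 : 4 * (rl + rp) ^ 2 * P < rp * (vg + s) ^ 2 := by
          have hCrp : (0:ℝ) < C ^ 2 * rp := by positivity
          nlinarith [h, hCrp]
        have h5 : 2 * (rl + rp) * P < s * (s + vg) := by
          nlinarith [h4, hs2', hrp]
        have h6 : rp * P < s ^ 2 := by
          by_contra hneg
          push_neg at hneg
          have hA : s ^ 2 * s ^ 2 ≤ (rp * P) * (rp * P) :=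
            mul_le_mul hneg hneg (sq_nonneg s) (by positivity)
          have hB : (4 * rl * (rl + rp) * P) * s ^ 2 ≤ (4 * rl * (rl + rp) * P) * (rp * P) :=
            mul_le_mul_of_nonneg_left hneg (by positivity)
          have hs2s : s ^ 2 * (rp * s ^ 2) =
              s ^ 2 * (rp * vg ^ 2) - s ^ 2 * (4 * rl * (rl + rp) * P) := by
            linear_combination s ^ 2 * hs2'
          have hA' := mul_le_mul_of_nonneg_left hA hrp.le
          have h7' : rp * (s ^ 2 * vg ^ 2) ≤ rp * (P ^ 2 * (rp + 2 * rl) ^ 2) := by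
            nlinarith [hA', hB, hs2s]
          have h7 : s ^ 2 * vg ^ 2 ≤ P ^ 2 * (rp + 2 * rl) ^ 2 :=
            le_of_mul_le_mul_left h7' hrp
          have hApos : (0:ℝ) < P * (rp + 2 * rl) := by positivity
          have h8 : s * vg ≤ P * (rp + 2 * rl) := by
            nlinarith [h7, mul_nonneg hs0 hvg.le, hApos]
          nlinarith [h5, h8, hneg]
        nlinarith [h6, hs2', hrp]
      · exfalso; nlinarith [hden, h]
    · intro hmp
      left
      refine ⟨?_, hden⟩
      have h6 : rp * P < s ^ 2 := by
        nlinarith [hmp, hs2', hrp]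
      have hA : (rp * P) * (rp * P) < s ^ 2 * s ^ 2 :=
        mul_lt_mul'' h6 h6 (by positivity) (by positivity)
      have hB : (4 * rl * (rl + rp) * P) * (rp * P) < (4 * rl * (rl + rp) * P) * s ^ 2 :=
        mul_lt_mul_of_pos_left h6 (by positivity)
      have hs2s : s ^ 2 * (rp * s ^ 2) =
          s ^ 2 * (rp * vg ^ 2) - s ^ 2 * (4 * rl * (rl + rp) * P) := by
        linear_combination s ^ 2 * hs2'
      have hA' := mul_lt_mul_of_pos_left hA hrp
      have h7' : rp * (P ^ 2 * (rp + 2 * rl) ^ 2) < rp * (s ^ 2 * vg ^ 2) := by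
        nlinarith [hA', hB, hs2s]
      have h7 : P ^ 2 * (rp + 2 * rl) ^ 2 < s ^ 2 * vg ^ 2 :=
        lt_of_mul_lt_mul_left h7' hrp.le
      have hApos : (0:ℝ) < P * (rp + 2 * rl) := by positivity
      have h8 : P * (rp + 2 * rl) < s * vg := by
        nlinarith [h7, mul_nonneg hs0 hvg.le, hApos]
      have h4 : 4 * (rl + rp) ^ 2 * P < rp * (vg + s) ^ 2 := by
        nlinarith [h6, h8, hs2', hrp]
      have := mul_lt_mul_of_pos_left h4 (show (0:ℝ) < C ^ 2 * rp by positivity)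
      nlinarith [this]
  rw [Matrix.posDef_diagonal_iff, Fin.forall_fin_two]
  simp only [Matrix.cons_val_zero, Matrix.cons_val_one, Matrix.head_cons]
  exact ⟨fun h => key.mp h.2, fun h => ⟨hrl, key.mpr h⟩⟩
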